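/- Let a, b, q ∈ ℝ^d with ‖b − q‖₁ ≥ (1 + ε)‖a − q‖₁ for some ε ∈ (0,1), and let δ' ∈ (0,1). Define the good region Good(a,b,q) ⊆ [d] as the set of coordinates z such that min(a^(z), b^(z)) − (8/(εδ'))|a^(z) − b^(z)| ≤ q^(z) ≤ max(a^(z), b^(z)) + (8/(εδ'))|a^(z) − b^(z)|. Then Σ_{z ∈ Good(a,b,q)} |b^(z) − a^(z)| ≥ (13/16)‖b − a‖₁. -/

import Mathlib

open Finset

theorem good_region_large_l1 (d : ℕ) (ε δ' : ℝ)
    (hε : 0 < ε) (hε1 : ε < 1) (hδ : 0 < δ') (hδ1 : δ' < 1)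
    (a b q : Fin d → ℝ) (haq : a ≠ q)
    (h : ∑ z, |b z - q z| ≥ (1 + ε) * ∑ z, |a z - q z|) :
    ∑ z ∈ Finset.univ.filter (fun z : Fin d =>
        min (a z) (b z) - 8 / (ε * δ') * |a z - b z| ≤ q z ∧
        q z ≤ max (a z) (b z) + 8 / (ε * δ') * |a z - b z|), |b z - a z|
      ≥ 13 / 16 * ∑ z, |b z - a z| := by
  set C : ℝ := 8 / (ε * δ') with hCdef
  have hC : 0 < C := by positivity
  set P : Fin d → Prop := fun z =>
    min (a z) (b z) - C * |a z - b z| ≤ q z ∧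
    q z ≤ max (a z) (b z) + C * |a z - b z| with hP
  set S : ℝ := ∑ z, |b z - a z| with hSdef
  set T : ℝ := ∑ z, |a z - q z| with hTdef
  have hS : 0 ≤ S := Finset.sum_nonneg fun z _ => abs_nonneg _
  have hT : 0 ≤ T := Finset.sum_nonneg fun z _ => abs_nonneg _
  -- triangle inequality sum
  have htri : ∑ z, |b z - q z| ≤ S + T := by
    rw [hSdef, hTdef, ← Finset.sum_add_distrib]
    exact Finset.sum_le_sum fun z _ => abs_sub_le (b z) (a z) (q z)
  have h1 : ε * T ≤ S := by nlinarith [h, htri]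
  -- pointwise bad bound
  have hbad : ∀ z ∈ Finset.univ.filter (fun z => ¬ P z),
      C * |b z - a z| ≤ |a z - q z| := by
    intro z hz
    rw [Finset.mem_filter] at hz
    have hz' := hz.2
    rw [hP] at hz'
    rcases not_and_or.mp hz' with h1 | h2
    · push_neg at h1
      have hmin : min (a z) (b z) ≤ a z := min_le_left _ _
      have habs : a z - q z ≤ |a z - q z| := le_abs_self _
      rw [abs_sub_comm (b z) (a z)]
      linarith
    · push_neg at h2
      have hmax : a z ≤ max (a z) (b z) := le_max_left _ _
      rw [abs_sub_comm (b z) (a z)]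
      have : q z - a z ≤ |a z - q z| := by
        rw [abs_sub_comm]; exact le_abs_self _
      linarith
  have hbadsum : C * ∑ z ∈ Finset.univ.filter (fun z => ¬ P z), |b z - a z| ≤ T := by
    rw [Finset.mul_sum]
    calc ∑ z ∈ Finset.univ.filter (fun z => ¬ P z), C * |b z - a z|
        ≤ ∑ z ∈ Finset.univ.filter (fun z => ¬ P z), |a z - q z| :=
          Finset.sum_le_sum hbad
      _ ≤ T := Finset.sum_le_sum_of_subset_of_nonneg (Finset.filter_subset _ _)
          (fun z _ _ => abs_nonneg _)
  have hsplit : (∑ z ∈ Finset.univ.filter P, |b z - a z|)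
      + ∑ z ∈ Finset.univ.filter (fun z => ¬ P z), |b z - a z| = S := by
    rw [hSdef]
    exact Finset.sum_filter_add_sum_filter_not _ _ _
  have hbadnn : 0 ≤ ∑ z ∈ Finset.univ.filter (fun z => ¬ P z), |b z - a z| :=
    Finset.sum_nonneg fun z _ => abs_nonneg _
  -- ∑ bad ≤ T / C ≤ S / (ε C) = S * δ' / 8
  have hεC : ε * C = 8 / δ' := by
    rw [hCdef]; field_simp
  have hkey : ε * C * (∑ z ∈ Finset.univ.filter (fun z => ¬ P z), |b z - a z|) ≤ S := by
    nlinarith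
  have hbadle : (∑ z ∈ Finset.univ.filter (fun z => ¬ P z), |b z - a z|) ≤ δ' / 8 * S := by
    rw [hεC] at hkey
    rw [div_mul_eq_mul_div, div_le_iff₀ hδ] at hkey
    nlinarith
  have hδS : δ' / 8 * S ≤ 3 / 16 * S := by nlinarith
  calc ∑ z ∈ Finset.univ.filter P, |b z - a z|
      = S - ∑ z ∈ Finset.univ.filter (fun z => ¬ P z), |b z - a z| := by linarith
    _ ≥ S - 3 / 16 * S := by linarith
    _ = 13 / 16 * S := by ring
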